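/- Every well-rounded sublattice of the Eisenstein integers ℤ[ω] of prime index ℓ is an ideal of ℤ[ω], and hence (being closed under multiplication by the six units) has exactly three pairs of minimal vectors. -/

import Mathlib

/-- The primitive cube root of unity `ω = e^{2πi/3}`. -/
noncomputable def ω : ℂ := Complex.exp (2 * Real.pi * Complex.I / 3)

/-- The Eisenstein lattice `ℤ[ω] ⊂ ℂ`. -/
noncomputable def Eisenstein : AddSubgroup ℂ := AddSubgroup.closure {1, ω}

/-- A plane lattice is well rounded if it has a ℤ-basis consisting of two
minimal vectors. -/
def IsWellRounded (M : AddSubgroup ℂ) : Prop :=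
  ∃ v w : ℂ, v ∈ M ∧ w ∈ M ∧ LinearIndependent ℝ ![v, w] ∧
    M = AddSubgroup.closure {v, w} ∧ ‖v‖ = ‖w‖ ∧
    ∀ u ∈ M, u ≠ 0 → ‖v‖ ≤ ‖u‖

/-- `v` is a minimal vector of `M`. -/
def IsMinimal (M : AddSubgroup ℂ) (v : ℂ) : Prop :=
  v ∈ M ∧ v ≠ 0 ∧ ∀ u ∈ M, u ≠ 0 → ‖v‖ ≤ ‖u‖

lemma omega_re : ω.re = -(1/2) := by
  have h : (2 * Real.pi * Complex.I / 3) = ((2 * Real.pi / 3 : ℝ) : ℂ) * Complex.I := by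
    push_cast; ring
  rw [ω, h, Complex.exp_ofReal_mul_I_re]
  have h2 : (2 * Real.pi / 3) = Real.pi - Real.pi/3 := by ring
  rw [h2, Real.cos_pi_sub, Real.cos_pi_div_three]

lemma omega_im : ω.im = Real.sqrt 3 / 2 := by
  have h : (2 * Real.pi * Complex.I / 3) = ((2 * Real.pi / 3 : ℝ) : ℂ) * Complex.I := by
    push_cast; ring
  rw [ω, h, Complex.exp_ofReal_mul_I_im]
  have h2 : (2 * Real.pi / 3) = Real.pi - Real.pi/3 := by ring
  rw [h2, Real.sin_pi_sub, Real.sin_pi_div_three]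

lemma sqrt3_sq : Real.sqrt 3 * Real.sqrt 3 = 3 := Real.mul_self_sqrt (by norm_num)

lemma omega_sq : ω ^ 2 = -1 - ω := by
  apply Complex.ext <;>
    simp [pow_two, Complex.mul_re, Complex.mul_im, omega_re, omega_im, sqrt3_sq] <;> ring_nf
  · nlinarith [sqrt3_sq]

lemma mem_closure_pair {a b z : ℂ} :
    z ∈ AddSubgroup.closure {a, b} ↔ ∃ x y : ℤ, z = x * a + y * b := by
  constructor
  · intro hz
    induction hz using AddSubgroup.closure_induction with
    | mem u hu =>
      rcases hu with h | h
      · exact ⟨1, 0, by simp [h]⟩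
      · exact ⟨0, 1, by simp [Set.mem_singleton_iff.mp h]⟩
    | zero => exact ⟨0, 0, by simp⟩
    | add _ _ _ _ h1 h2 =>
      rcases h1 with ⟨x, y, rfl⟩; rcases h2 with ⟨x', y', rfl⟩
      exact ⟨x + x', y + y', by push_cast; ring⟩
    | neg _ _ h =>
      rcases h with ⟨x, y, rfl⟩
      exact ⟨-x, -y, by push_cast; ring⟩
  · rintro ⟨x, y, rfl⟩
    have ha : a ∈ AddSubgroup.closure ({a, b} : Set ℂ) :=
      AddSubgroup.subset_closure (by simp)
    have hb : b ∈ AddSubgroup.closure ({a, b} : Set ℂ) :=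
      AddSubgroup.subset_closure (by simp)
    have := AddSubgroup.add_mem _ (AddSubgroup.zsmul_mem _ ha x) (AddSubgroup.zsmul_mem _ hb y)
    simpa [zsmul_eq_mul] using this

lemma coord_unique {x y x' y' : ℤ} (h : (x:ℂ) + y*ω = x' + y'*ω) : x = x' ∧ y = y' := by
  have him := congrArg Complex.im h
  have hre := congrArg Complex.re h
  simp [Complex.add_im, Complex.mul_im, Complex.add_re, Complex.mul_re, omega_im, omega_re]
    at him hre
  subst him
  refine ⟨?_, rfl⟩
  have : (x:ℝ) = x' := by linarith
  exact_mod_cast this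

lemma normSq_coords (x y : ℤ) :
    Complex.normSq ((x:ℂ) + y*ω) = ((x^2 - x*y + y^2 : ℤ) : ℝ) := by
  simp [Complex.normSq_apply, Complex.add_re, Complex.add_im, Complex.mul_re, Complex.mul_im,
    omega_re, omega_im]
  nlinarith [sqrt3_sq]

lemma abs_le_abs_iff_normSq {u v : ℂ} :
    ‖u‖ ≤ ‖v‖ ↔ Complex.normSq u ≤ Complex.normSq v := by
  rw [Complex.norm_def, Complex.norm_def]
  exact Real.sqrt_le_sqrt_iff (Complex.normSq_nonneg v)

lemma abs_eq_abs_iff_normSq {u v : ℂ} :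
    ‖u‖ = ‖v‖ ↔ Complex.normSq u = Complex.normSq v := by
  constructor
  · intro h
    have := congrArg (· ^ 2) h
    simpa [Complex.sq_norm] using this
  · intro h
    rw [Complex.norm_def, Complex.norm_def, h]

lemma small_mul_eq_zero {L x c : ℤ} (hL : 0 < L) (h : x = L * c) (h1 : -L < x) (h2 : x < L) :
    x = 0 := by
  have hc1 : c < 1 := by nlinarith
  have hc2 : -1 < c := by nlinarith
  have hc0 : c = 0 := by omega
  rw [h, hc0, mul_zero]

lemma key_nt {ℓ : ℕ} (hℓ : ℓ.Prime) {N t : ℤ} (hN1 : 1 ≤ N)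
    (ht1 : t ≤ N) (ht2 : -N ≤ t) (heq : 4*N^2 = t^2 + 3*(ℓ:ℤ)^2) :
    N = ℓ ∧ (t = ℓ ∨ t = -ℓ) := by
  have hl : Prime (ℓ:ℤ) := Int.prime_iff_natAbs_prime.mpr (by simpa using hℓ)
  have hlpos : (0:ℤ) < ℓ := by exact_mod_cast hℓ.pos
  have hNl : N ≤ ℓ := by nlinarith
  have hprod : (2*N - t) * (2*N + t) = (ℓ:ℤ) * (3*ℓ) := by ring_nf; linarith [heq]
  have hdvd : (ℓ:ℤ) ∣ (2*N - t) * (2*N + t) := ⟨3*ℓ, hprod⟩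
  have h2 : 2 ∣ ℓ → ℓ = 2 := fun h => ((Nat.prime_dvd_prime_iff_eq Nat.prime_two hℓ).mp h).symm
  rcases hl.dvd_mul.mp hdvd with ⟨k, hk⟩ | ⟨k, hk⟩
  · obtain ⟨hk1, hk3⟩ : 1 ≤ k ∧ k ≤ 3 := by constructor <;> nlinarith
    have hcan : k * (2*N + t) = 3*ℓ := by
      have h := mul_left_cancel₀ (ne_of_gt hlpos)
        (show (ℓ:ℤ) * (k * (2*N + t)) = (ℓ:ℤ) * (3*ℓ) by rw [← hprod, hk]; ring)
      exact h
    interval_cases k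
    · constructor <;> omega
    · have h2' : 2 ∣ ℓ := by omega
      have := h2 h2'; subst this; omega
    · constructor <;> omega
  · obtain ⟨hk1, hk3⟩ : 1 ≤ k ∧ k ≤ 3 := by constructor <;> nlinarith
    have hcan : k * (2*N - t) = 3*ℓ := by
      have h := mul_left_cancel₀ (ne_of_gt hlpos)
        (show (ℓ:ℤ) * (k * (2*N - t)) = (ℓ:ℤ) * (3*ℓ) by rw [← hprod, hk]; ring)
      exact h
    interval_cases k
    · constructor <;> omega
    · have h2' : 2 ∣ ℓ := by omega
      have := h2 h2'; subst this; omega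
    · constructor <;> omega

lemma count_sols {ε : ℤ} (hε : ε = 1 ∨ ε = -1) :
    Nat.card {z : ℤ × ℤ // z.1^2 + ε*z.1*z.2 + z.2^2 = 1} = 6 := by
  have hset : {z : ℤ × ℤ | z.1^2 + ε*z.1*z.2 + z.2^2 = 1} =
      (↑({(1,0),(-1,0),(0,1),(0,-1),(1,-ε),(-1,ε)} : Finset (ℤ × ℤ)) : Set (ℤ × ℤ)) := by
    ext ⟨x, y⟩
    simp only [Set.mem_setOf_eq, Finset.coe_insert, Set.mem_insert_iff,
      Finset.coe_singleton, Set.mem_singleton_iff, Prod.mk.injEq]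
    rcases hε with rfl | rfl
    · constructor
      · intro h
        have hy1 : -1 ≤ y ∧ y ≤ 1 := by constructor <;> nlinarith [sq_nonneg (2*x + y)]
        have hx1 : -1 ≤ x ∧ x ≤ 1 := by constructor <;> nlinarith [sq_nonneg (x + 2*y)]
        obtain ⟨hy1, hy2⟩ := hy1; obtain ⟨hx1, hx2⟩ := hx1
        interval_cases x <;> interval_cases y <;> omega
      · rintro (⟨rfl, rfl⟩ | ⟨rfl, rfl⟩ | ⟨rfl, rfl⟩ | ⟨rfl, rfl⟩ | ⟨rfl, rfl⟩ | ⟨rfl, rfl⟩) <;>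
          ring
    · constructor
      · intro h
        have hy1 : -1 ≤ y ∧ y ≤ 1 := by constructor <;> nlinarith [sq_nonneg (2*x - y)]
        have hx1 : -1 ≤ x ∧ x ≤ 1 := by constructor <;> nlinarith [sq_nonneg (x - 2*y)]
        obtain ⟨hy1, hy2⟩ := hy1; obtain ⟨hx1, hx2⟩ := hx1
        interval_cases x <;> interval_cases y <;> omega
      · rintro (⟨rfl, rfl⟩ | ⟨rfl, rfl⟩ | ⟨rfl, rfl⟩ | ⟨rfl, rfl⟩ | ⟨rfl, rfl⟩ | ⟨rfl, rfl⟩) <;>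
          ring
  have hcc : Nat.card {z : ℤ × ℤ // z.1^2 + ε*z.1*z.2 + z.2^2 = 1}
      = ({(1,0),(-1,0),(0,1),(0,-1),(1,-ε),(-1,ε)} : Finset (ℤ × ℤ)).card := by
    have h0 : {z : ℤ × ℤ // z.1^2 + ε*z.1*z.2 + z.2^2 = 1}
        = ↥{z : ℤ × ℤ | z.1^2 + ε*z.1*z.2 + z.2^2 = 1} := rfl
    rw [h0, hset]
    rw [Nat.card_coe_set_eq, Set.ncard_coe_finset]
  rw [hcc]
  rcases hε with rfl | rfl <;> decide

set_option maxHeartbeats 1600000 in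
/-- Every well-rounded sublattice of `ℤ[ω]` of prime index `ℓ` is an ideal of
`ℤ[ω]`, and hence has exactly three pairs of minimal vectors (six minimal
vectors). -/
theorem wellRounded_sublattice_is_ideal (ℓ : ℕ) (hℓ : ℓ.Prime)
    (M : AddSubgroup ℂ) (hM : M ≤ Eisenstein)
    (hidx : (M.addSubgroupOf Eisenstein).index = ℓ)
    (hWR : IsWellRounded M) :
    (∀ z ∈ Eisenstein, ∀ m ∈ M, z * m ∈ M) ∧
    Nat.card {v : ℂ // IsMinimal M v} = 6 := by
  obtain ⟨v, w, hvM, hwM, hind, hMeq, habs, hmin⟩ := hWR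
  have memM : ∀ z : ℂ, z ∈ M ↔ ∃ x y : ℤ, z = x * v + y * w := by
    intro z; rw [hMeq]; exact mem_closure_pair
  have memE : ∀ z : ℂ, z ∈ Eisenstein ↔ ∃ x y : ℤ, z = x + y * ω := by
    intro z; rw [Eisenstein]
    simpa using (mem_closure_pair (a := 1) (b := ω) (z := z))
  obtain ⟨p, q, hv⟩ := (memE v).mp (hM hvM)
  obtain ⟨r, s, hw⟩ := (memE w).mp (hM hwM)
  have hv0 : v ≠ 0 := by
    have := hind.ne_zero 0
    simpa using this
  have hli : ∀ x y : ℝ, x • v + y • w = 0 → x = 0 ∧ y = 0 :=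
    fun x y h => LinearIndependent.pair_iff.mp hind x y h
  have key : ∀ c d : ℤ, (c:ℂ)*v + (d:ℂ)*w = 0 → c = 0 ∧ d = 0 := by
    intro c d hcd
    have h := hli (c:ℝ) (d:ℝ) (by
      rw [Complex.real_smul, Complex.real_smul]
      push_cast
      exact_mod_cast hcd)
    constructor
    · exact_mod_cast h.1
    · exact_mod_cast h.2
  have combo : ∀ x y : ℤ, (x:ℂ) * v + (y:ℂ) * w
      = ((x*p + y*r : ℤ):ℂ) + ((x*q + y*s : ℤ):ℂ) * ω := by
    intro x y; rw [hv, hw]; push_cast; ring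
  -- introduce the basic integer quantities
  obtain ⟨N, hN⟩ : ∃ N : ℤ, N = p^2 - p*q + q^2 := ⟨_, rfl⟩
  obtain ⟨b, hb⟩ : ∃ b : ℤ, b = p*s - q*r := ⟨_, rfl⟩
  obtain ⟨a, ha⟩ : ∃ a : ℤ, a = p*r - q*r + q*s := ⟨_, rfl⟩
  obtain ⟨t, htdef⟩ : ∃ t : ℤ, t = 2*a - b := ⟨_, rfl⟩
  have hNv : Complex.normSq v = (N:ℝ) := by rw [hv, normSq_coords, ← hN]
  have hNw : r^2 - r*s + s^2 = N := by
    have h := abs_eq_abs_iff_normSq.mp habs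
    rw [hNv, hw, normSq_coords] at h
    exact_mod_cast h.symm
  have hb0 : b ≠ 0 := by
    intro h0
    have k1 : r = 0 ∧ -p = 0 := by
      apply key
      rw [combo r (-p)]
      have e1 : r*p + -p*r = 0 := by ring
      have e2 : r*q + -p*s = 0 := by rw [hb] at h0; linarith
      rw [e1, e2]; norm_num
    have k2 : s = 0 ∧ -q = 0 := by
      apply key
      rw [combo s (-q)]
      have e1 : s*p + -q*r = 0 := by rw [hb] at h0; linarith [k1.1, k1.2]
      have e2 : s*q + -q*s = 0 := by ring
      rw [e1, e2]; norm_num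
    apply hv0
    rw [hv]
    have hp0 : p = 0 := by linarith [k1.2]
    have hq0 : q = 0 := by linarith [k2.2]
    rw [hp0, hq0]; norm_num
  -- Lagrange: ℓ•Eisenstein ⊆ M
  have h1E : (1:ℂ) ∈ Eisenstein := AddSubgroup.subset_closure (by simp)
  have hωE : ω ∈ Eisenstein := AddSubgroup.subset_closure (by simp)
  have lag : ∀ z : ℂ, z ∈ Eisenstein → (ℓ:ℂ) * z ∈ M := by
    intro z hz
    have h := AddSubgroup.nsmul_index_mem (M.addSubgroupOf Eisenstein) (⟨z, hz⟩ : Eisenstein)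
    rw [hidx, AddSubgroup.mem_addSubgroupOf] at h
    simpa [nsmul_eq_mul] using h
  obtain ⟨m, n, hmn⟩ := (memM _).mp (lag 1 h1E)
  obtain ⟨m', n', hmn'⟩ := (memM _).mp (lag ω hωE)
  have e1' : ((m*p + n*r : ℤ):ℂ) + ((m*q + n*s : ℤ):ℂ)*ω = ((ℓ:ℤ):ℂ) + ((0:ℤ):ℂ)*ω := by
    rw [← combo m n, ← hmn]; push_cast; ring
  have e2' : ((m'*p + n'*r : ℤ):ℂ) + ((m'*q + n'*s : ℤ):ℂ)*ω = ((0:ℤ):ℂ) + ((ℓ:ℤ):ℂ)*ω := by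
    rw [← combo m' n', ← hmn']; push_cast; ring
  obtain ⟨h1, h2⟩ := coord_unique e1'
  obtain ⟨h3, h4⟩ := coord_unique e2'
  have hD : (ℓ:ℤ)*ℓ = b * (m*n' - m'*n) := by
    rw [hb]
    linear_combination (-(m'*q + n'*s)) * h1 + (m'*p + n'*r) * h2 - (ℓ:ℤ) * h4
  -- b divides ℓ²
  have hdvd : b ∣ (ℓ:ℤ)*ℓ := ⟨m*n' - m'*n, hD⟩
  have hbnat : b.natAbs ∣ ℓ^2 := by
    have h := Int.natAbs_dvd_natAbs.mpr hdvd
    simpa [Int.natAbs_mul, pow_two] using h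
  obtain ⟨i, hi2, hbi⟩ := (Nat.dvd_prime_pow hℓ).mp hbnat
  have hbl : b = ℓ ∨ b = -ℓ := by
    interval_cases i
    · -- |b| = 1 : M = Eisenstein, index 1, contradiction
      exfalso
      simp only [pow_zero] at hbi
      rcases Int.natAbs_eq_iff.mp hbi with hb1 | hb1
      all_goals {
        have hbb : b * b = 1 := by rw [hb1]; ring
        have h1M : (1:ℂ) ∈ M := by
          refine (memM 1).mpr ⟨b*s, -(b*q), ?_⟩
          rw [combo (b*s) (-(b*q)),
            show b*s*p + -(b*q)*r = 1 by linear_combination hbb - b*hb,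
            show b*s*q + -(b*q)*s = 0 by ring]
          norm_num
        have hωM' : ω ∈ M := by
          refine (memM ω).mpr ⟨-(b*r), b*p, ?_⟩
          rw [combo (-(b*r)) (b*p),
            show -(b*r)*p + b*p*r = 0 by ring,
            show -(b*r)*q + b*p*s = 1 by linear_combination hbb - b*hb]
          norm_num
        have hEM : Eisenstein ≤ M := by
          rw [Eisenstein]
          refine AddSubgroup.closure_le M |>.mpr ?_
          intro z hz
          rcases hz with rfl | hz
          · exact h1M
          · rw [Set.mem_singleton_iff] at hz; subst hz; exact hωM'
        have hMtop : M.addSubgroupOf Eisenstein = ⊤ := by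
          rw [AddSubgroup.eq_top_iff']
          intro x
          rw [AddSubgroup.mem_addSubgroupOf]
          exact hEM x.2
        rw [hMtop, AddSubgroup.index_top] at hidx
        exact hℓ.ne_one hidx.symm }
    · -- |b| = ℓ
      simp only [pow_one] at hbi
      rcases Int.natAbs_eq_iff.mp hbi with h | h
      · exact Or.inl h
      · exact Or.inr h
    · -- |b| = ℓ² : M = ℓ·Eisenstein, index ℓ², contradiction
      exfalso
      -- |m*n' - m'*n| = 1
      have hDD : (m*n' - m'*n) * (m*n' - m'*n) = 1 := by
        have hnat := congrArg Int.natAbs hD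
        rw [Int.natAbs_mul, Int.natAbs_mul, Int.natAbs_natCast, hbi] at hnat
        have hl1 : 1 ≤ ℓ := hℓ.one_lt.le
        have : (m*n' - m'*n).natAbs = 1 := by
          rcases Nat.eq_zero_or_pos ((m*n' - m'*n).natAbs) with h0 | hpos
          · rw [h0] at hnat; simp at hnat; omega
          · nlinarith [hnat]
        rcases Int.natAbs_eq_iff.mp this with h | h <;> rw [h] <;> ring
      set D := m*n' - m'*n with hDdef
      have hp' : D * p = n' * ℓ := by linear_combination n'*h1 - n*h3
      have hq' : D * q = -(n * ℓ) := by linear_combination n'*h2 - n*h4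
      have hr' : D * r = -(m' * ℓ) := by linear_combination m*h3 - m'*h1
      have hs' : D * s = m * ℓ := by linear_combination m*h4 - m'*h2
      have hdp : (ℓ:ℤ) ∣ p := ⟨D*n', by linear_combination D*hp' - p*hDD⟩
      have hdq : (ℓ:ℤ) ∣ q := ⟨-(D*n), by linear_combination D*hq' - q*hDD⟩
      have hdr : (ℓ:ℤ) ∣ r := ⟨-(D*m'), by linear_combination D*hr' - r*hDD⟩
      have hds : (ℓ:ℤ) ∣ s := ⟨D*m, by linear_combination D*hs' - s*hDD⟩
      -- build an injection Fin ℓ × Fin ℓ → quotient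
      have hfin : Finite (Eisenstein ⧸ M.addSubgroupOf Eisenstein) := by
        apply Nat.finite_of_card_ne_zero
        have : Nat.card (Eisenstein ⧸ M.addSubgroupOf Eisenstein)
            = (M.addSubgroupOf Eisenstein).index := rfl
        rw [this, hidx]
        exact hℓ.pos.ne'
      set f : Fin ℓ × Fin ℓ → (Eisenstein ⧸ M.addSubgroupOf Eisenstein) :=
        fun ij => QuotientAddGroup.mk
          ⟨((ij.1 : ℕ):ℂ) + ((ij.2 : ℕ):ℂ)*ω,
            (memE _).mpr ⟨(ij.1 : ℕ), (ij.2 : ℕ), by push_cast; ring⟩⟩ with hf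
      have hinj : Function.Injective f := by
        rintro ⟨i, j⟩ ⟨i', j'⟩ hff
        rw [hf] at hff
        have hmem := QuotientAddGroup.eq.mp hff
        rw [AddSubgroup.mem_addSubgroupOf] at hmem
        obtain ⟨x, y, hxy⟩ := (memM _).mp hmem
        have hco : (((i':ℕ) - (i:ℕ) : ℤ):ℂ) + (((j':ℕ) - (j:ℕ) : ℤ):ℂ)*ω
            = ((x*p + y*r : ℤ):ℂ) + ((x*q + y*s : ℤ):ℂ)*ω := by
          rw [← combo x y, ← hxy]
          push_cast
          ring
        obtain ⟨hc1, hc2⟩ := coord_unique hco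
        have hd1 : (ℓ:ℤ) ∣ (x*p + y*r) := dvd_add (hdp.mul_left x) (hdr.mul_left y)
        have hd2 : (ℓ:ℤ) ∣ (x*q + y*s) := dvd_add (hdq.mul_left x) (hds.mul_left y)
        rw [← hc1] at hd1
        rw [← hc2] at hd2
        obtain ⟨c, hc⟩ := hd1
        obtain ⟨c', hc'⟩ := hd2
        have hi : (i:ℕ) < ℓ := i.isLt
        have hi' : (i':ℕ) < ℓ := i'.isLt
        have hj : (j:ℕ) < ℓ := j.isLt
        have hj' : (j':ℕ) < ℓ := j'.isLt
        have hlpos : (0:ℤ) < ℓ := by exact_mod_cast hℓ.pos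
        have hc0 : ((i':ℕ):ℤ) - ((i:ℕ):ℤ) = 0 :=
          small_mul_eq_zero hlpos hc (by omega) (by omega)
        have hc0' : ((j':ℕ):ℤ) - ((j:ℕ):ℤ) = 0 :=
          small_mul_eq_zero hlpos hc' (by omega) (by omega)
        have h1' : (i:ℕ) = (i':ℕ) := by omega
        have h2' : (j:ℕ) = (j':ℕ) := by omega
        exact Prod.ext (Fin.ext h1') (Fin.ext h2')
      have hle := Nat.card_le_card_of_injective f hinj
      have hcq : Nat.card (Eisenstein ⧸ M.addSubgroupOf Eisenstein) = ℓ := hidx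
      rw [hcq] at hle
      simp only [Nat.card_eq_fintype_card, Fintype.card_prod, Fintype.card_fin] at hle
      nlinarith [hℓ.two_le]
  -- Main case: |b| = ℓ
  have hbsq : b^2 = (ℓ:ℤ)^2 := by rcases hbl with h|h <;> rw [h] <;> ring
  have hmult : a^2 - a*b + b^2 = N * (r^2 - r*s + s^2) := by rw [ha, hb, hN]; ring
  have e5 : 4*(N*(r^2-r*s+s^2)) = t^2 + 3*b^2 := by rw [← hmult, htdef]; ring
  have heq : 4*N^2 = t^2 + 3*(ℓ:ℤ)^2 := by rw [← hbsq, ← e5, hNw]; ring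
  have hN1 : 1 ≤ N := by
    have h := Complex.normSq_pos.mpr hv0
    rw [hNv] at h
    exact_mod_cast h
  have hvw_ne : v - w ≠ 0 := by
    intro h
    have hvw : v = w := by linear_combination h
    rw [hv, hw] at hvw
    obtain ⟨hpr, hqs⟩ := coord_unique hvw
    apply hb0
    rw [hb, hpr, hqs]; ring
  have hvw_ne' : v + w ≠ 0 := by
    intro h
    have hvw : (p:ℂ) + q*ω = ((-r : ℤ):ℂ) + ((-s : ℤ):ℂ)*ω := by
      rw [hv, hw] at h; push_cast; linear_combination h
    obtain ⟨hpr, hqs⟩ := coord_unique hvw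
    apply hb0
    rw [hb, hpr, hqs]; ring
  have ht1 : t ≤ N := by
    have h := abs_le_abs_iff_normSq.mp (hmin (v - w) (sub_mem hvM hwM) hvw_ne)
    rw [hNv] at h
    have hsubc : v - w = (((p - r : ℤ)):ℂ) + ((q - s : ℤ):ℂ)*ω := by
      rw [hv, hw]; push_cast; ring
    rw [hsubc, normSq_coords] at h
    have h' : N ≤ (p-r)^2 - (p-r)*(q-s) + (q-s)^2 := by exact_mod_cast h
    have hid : (p-r)^2 - (p-r)*(q-s) + (q-s)^2 = N + (r^2 - r*s + s^2) - t := by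
      rw [hN, htdef, ha, hb]; ring
    rw [hid, hNw] at h'
    linarith
  have ht2 : -N ≤ t := by
    have h := abs_le_abs_iff_normSq.mp (hmin (v + w) (add_mem hvM hwM) hvw_ne')
    rw [hNv] at h
    have hsubc : v + w = (((p + r : ℤ)):ℂ) + ((q + s : ℤ):ℂ)*ω := by
      rw [hv, hw]; push_cast; ring
    rw [hsubc, normSq_coords] at h
    have h' : N ≤ (p+r)^2 - (p+r)*(q+s) + (q+s)^2 := by exact_mod_cast h
    have hid : (p+r)^2 - (p+r)*(q+s) + (q+s)^2 = N + (r^2 - r*s + s^2) + t := by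
      rw [hN, htdef, ha, hb]; ring
    rw [hid, hNw] at h'
    linarith
  obtain ⟨hNl, htpm⟩ := key_nt hℓ hN1 ht1 ht2 heq
  have h2a : 2*a = t + b := by rw [htdef]; ring
  obtain ⟨a0, haa⟩ : ∃ a0 : ℤ, a = b * a0 := by
    rcases htpm with h|h <;> rcases hbl with h'|h' <;>
      first
        | exact ⟨1, by omega⟩
        | exact ⟨0, by omega⟩
  obtain ⟨y0, hy0⟩ : ∃ y0 : ℤ, N = b * y0 := by
    rcases hbl with h|h
    · exact ⟨1, by omega⟩
    · exact ⟨-1, by omega⟩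
  have c1 : (-a0)*p + y0*r = -q := by
    apply mul_left_cancel₀ hb0
    calc b*((-a0)*p + y0*r) = -((b*a0)*p) + (b*y0)*r := by ring
      _ = -(a*p) + N*r := by rw [← haa, ← hy0]
      _ = b*(-q) := by rw [ha, hN, hb]; ring
  have c2 : (-a0)*q + y0*s = p - q := by
    apply mul_left_cancel₀ hb0
    calc b*((-a0)*q + y0*s) = -((b*a0)*q) + (b*y0)*s := by ring
      _ = -(a*q) + N*s := by rw [← haa, ← hy0]
      _ = b*(p - q) := by rw [ha, hN, hb]; ring
  have c3 : (-y0)*p + (a0 - 1)*r = -s := by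
    apply mul_left_cancel₀ hb0
    calc b*((-y0)*p + (a0 - 1)*r) = -((b*y0)*p) + ((b*a0) - b)*r := by ring
      _ = -(N*p) + (a - b)*r := by rw [← haa, ← hy0]
      _ = -((r^2 - r*s + s^2)*p) + (a - b)*r := by rw [hNw]
      _ = b*(-s) := by rw [ha, hb]; ring
  have c4 : (-y0)*q + (a0 - 1)*s = r - s := by
    apply mul_left_cancel₀ hb0
    calc b*((-y0)*q + (a0 - 1)*s) = -((b*y0)*q) + ((b*a0) - b)*s := by ring
      _ = -(N*q) + (a - b)*s := by rw [← haa, ← hy0]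
      _ = -((r^2 - r*s + s^2)*q) + (a - b)*s := by rw [hNw]
      _ = b*(r - s) := by rw [ha, hb]; ring
  have hωv : ω * v ∈ M := by
    refine (memM _).mpr ⟨-a0, y0, ?_⟩
    rw [combo (-a0) y0, c1, c2, hv]
    push_cast
    linear_combination (q:ℂ) * omega_sq
  have hωw : ω * w ∈ M := by
    refine (memM _).mpr ⟨-y0, a0 - 1, ?_⟩
    rw [combo (-y0) (a0 - 1), c3, c4, hw]
    push_cast
    linear_combination (s:ℂ) * omega_sq
  have hωM : ∀ m'' ∈ M, ω * m'' ∈ M := by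
    intro m'' hm
    obtain ⟨x, y, rfl⟩ := (memM m'').mp hm
    have hrw : ω*((x:ℂ)*v + (y:ℂ)*w) = (x:ℂ)*(ω*v) + (y:ℂ)*(ω*w) := by ring
    rw [hrw]
    exact add_mem (by simpa [zsmul_eq_mul] using M.zsmul_mem hωv x)
      (by simpa [zsmul_eq_mul] using M.zsmul_mem hωw y)
  constructor
  · -- ideal property
    intro z hz m'' hm
    obtain ⟨x, y, rfl⟩ := (memE z).mp hz
    have hrw : ((x:ℂ) + (y:ℂ)*ω)*m'' = (x:ℂ)*m'' + (y:ℂ)*(ω*m'') := by ring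
    rw [hrw]
    exact add_mem (by simpa [zsmul_eq_mul] using M.zsmul_mem hm x)
      (by simpa [zsmul_eq_mul] using M.zsmul_mem (hωM m'' hm) y)
  · -- counting minimal vectors
    obtain ⟨ε, hε, htε⟩ : ∃ ε : ℤ, (ε = 1 ∨ ε = -1) ∧ t = ε*ℓ := by
      rcases htpm with h|h
      · exact ⟨1, Or.inl rfl, by omega⟩
      · exact ⟨-1, Or.inr rfl, by omega⟩
    have hns : ∀ x y : ℤ, Complex.normSq ((x:ℂ)*v + (y:ℂ)*w)
        = (((ℓ:ℤ) * (x^2 + ε*x*y + y^2) : ℤ) : ℝ) := by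
      intro x y
      rw [combo x y, normSq_coords]
      have hidd : (x*p+y*r)^2 - (x*p+y*r)*(x*q+y*s) + (x*q+y*s)^2
          = (ℓ:ℤ)*(x^2 + ε*x*y + y^2) := by
        have expand : (x*p+y*r)^2 - (x*p+y*r)*(x*q+y*s) + (x*q+y*s)^2
            = N*x^2 + t*(x*y) + (r^2-r*s+s^2)*y^2 := by
          rw [hN, htdef, ha, hb]; ring
        rw [expand, hNw, hNl, htε]; ring
      exact_mod_cast congrArg (fun z : ℤ => (z:ℝ)) hidd
    have hlpos : (0:ℤ) < ℓ := by exact_mod_cast hℓ.pos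
    have hmins : ∀ x y : ℤ, x^2 + ε*x*y + y^2 = 1 → IsMinimal M ((x:ℂ)*v + (y:ℂ)*w) := by
      intro x y hQ
      have hmem : (x:ℂ)*v + (y:ℂ)*w ∈ M := (memM _).mpr ⟨x, y, rfl⟩
      have hnz : (x:ℂ)*v + (y:ℂ)*w ≠ 0 := by
        intro h0
        obtain ⟨hx0, hy0'⟩ := key x y h0
        rw [hx0, hy0'] at hQ
        norm_num at hQ
      have habs' : ‖(x:ℂ)*v + (y:ℂ)*w‖ = ‖v‖ := by
        rw [abs_eq_abs_iff_normSq, hns x y, hQ, hNv, hNl]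
        norm_num
      exact ⟨hmem, hnz, fun u hu hu0 => habs' ▸ hmin u hu hu0⟩
    set F : {z : ℤ × ℤ // z.1^2 + ε*z.1*z.2 + z.2^2 = 1} → {u : ℂ // IsMinimal M u} :=
      fun z => ⟨(z.1.1:ℂ)*v + (z.1.2:ℂ)*w, hmins z.1.1 z.1.2 z.2⟩ with hF
    have hFbij : Function.Bijective F := by
      constructor
      · rintro ⟨⟨x, y⟩, hz⟩ ⟨⟨x', y'⟩, hz'⟩ hFF
        rw [hF] at hFF
        have hval : (x:ℂ)*v + (y:ℂ)*w = (x':ℂ)*v + (y':ℂ)*w := congrArg Subtype.val hFF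
        have hdiff : ((x - x' : ℤ):ℂ)*v + ((y - y' : ℤ):ℂ)*w = 0 := by
          push_cast
          linear_combination hval
        obtain ⟨hx, hy⟩ := key _ _ hdiff
        have : x = x' := by omega
        have h2 : y = y' := by omega
        subst this; subst h2
        rfl
      · rintro ⟨u, humem, hu0, humin⟩
        obtain ⟨x, y, rfl⟩ := (memM u).mp humem
        have hle1 : ‖(x:ℂ)*v + (y:ℂ)*w‖ ≤ ‖v‖ := humin v hvM hv0
        have hle2 : ‖v‖ ≤ ‖(x:ℂ)*v + (y:ℂ)*w‖ := hmin _ humem hu0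
        have hnseq := abs_eq_abs_iff_normSq.mp (le_antisymm hle1 hle2)
        rw [hns x y, hNv, hNl] at hnseq
        have hZ : (ℓ:ℤ) * (x^2 + ε*x*y + y^2) = (ℓ:ℤ) := by exact_mod_cast hnseq
        have hQ : x^2 + ε*x*y + y^2 = 1 := by
          have := mul_left_cancel₀ (ne_of_gt hlpos) (by rw [hZ]; ring : (ℓ:ℤ) * (x^2 + ε*x*y + y^2) = (ℓ:ℤ) * 1)
          exact this
        exact ⟨⟨(x, y), hQ⟩, rfl⟩
    have := Nat.card_eq_of_bijective F hFbij
    rw [← this, count_sols hε]
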